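/- Asymptotic dynamics: let P denote the orthogonal projection (with respect to the Hilbert–Schmidt inner product) of the space of d×d complex matrices onto the attractor space Atr(Φ), the direct sum of all eigenspaces Ker(Φ − λ·id) over eigenvalues λ with |λ| = 1. Then for every d×d complex matrix ρ, ‖Φ^n(ρ) − (Φ ∘ P)^n(ρ)‖_HS → 0 as n → ∞. -/

import Mathlib

open Matrix BigOperators
open Filter

/-- The Hilbert–Schmidt (Frobenius) norm of a matrix, `‖A‖ = √Tr(A†A)`. -/
noncomputable def hsNorm {d : ℕ} (A : Matrix (Fin d) (Fin d) ℂ) : ℝ :=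
  Real.sqrt ((Aᴴ * A).trace.re)

noncomputable def matEquiv (d : ℕ) :
    Matrix (Fin d) (Fin d) ℂ ≃ₗ[ℂ] EuclideanSpace ℂ (Fin d × Fin d) where
  toFun A := WithLp.toLp 2 (fun ij : Fin d × Fin d => A ij.1 ij.2)
  map_add' A B := rfl
  map_smul' c A := rfl
  invFun x := Matrix.of fun i j => x (i, j)
  left_inv A := rfl
  right_inv x := rfl

lemma inner_matEquiv {d : ℕ} (A B : Matrix (Fin d) (Fin d) ℂ) :
    (inner ℂ (matEquiv d A) (matEquiv d B) : ℂ) = (Aᴴ * B).trace := by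
  classical
  rw [PiLp.inner_apply]
  simp only [RCLike.inner_apply, matEquiv, LinearEquiv.coe_mk]
  rw [Fintype.sum_prod_type]
  rw [Matrix.trace]
  simp only [Matrix.diag_apply, Matrix.mul_apply, Matrix.conjTranspose_apply]
  rw [Finset.sum_comm]
  exact Finset.sum_congr rfl fun _ _ => Finset.sum_congr rfl fun _ _ => mul_comm _ _

lemma hsNorm_matEquiv {d : ℕ} (A : Matrix (Fin d) (Fin d) ℂ) :
    Real.sqrt ((Aᴴ * A).trace.re) = ‖matEquiv d A‖ := by
  rw [norm_eq_sqrt_re_inner (𝕜 := ℂ), inner_matEquiv]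
  rfl


variable {E : Type*} [NormedAddCommGroup E] [InnerProductSpace ℂ E]

/-- The submodule of vectors whose iterates under `T` tend to zero. -/
def Vsub (T : Module.End ℂ E) : Submodule ℂ E where
  carrier := {x | Tendsto (fun n => (T ^ n) x) atTop (nhds 0)}
  add_mem' := by
    intro a b ha hb
    have h := Tendsto.add ha hb
    simp only [add_zero] at h
    simpa [map_add] using h
  zero_mem' := by simpa [map_zero] using (tendsto_const_nhds :
    Tendsto (fun _ : ℕ => (0 : E)) atTop (nhds 0))
  smul_mem' := by
    intro c x hx
    have h := hx.const_smul c
    simp only [smul_zero] at h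
    simpa [_root_.map_smul] using h

lemma mem_Vsub {T : Module.End ℂ E} {x : E} :
    x ∈ Vsub T ↔ Tendsto (fun n => (T ^ n) x) atTop (nhds 0) := Iff.rfl

set_option maxHeartbeats 2000000 in
theorem key_tendsto [FiniteDimensional ℂ E] (T : Module.End ℂ E)
    (hT : ∀ x, ‖T x‖ ≤ ‖x‖) {y : E}
    (hy : y ∈ (⨆ lam ∈ {l : ℂ | ‖l‖ = 1}, Module.End.eigenspace T lam)ᗮ) :
    Tendsto (fun n => (T ^ n) y) atTop (nhds 0) := by
  set A : Submodule ℂ E := ⨆ lam ∈ {l : ℂ | ‖l‖ = 1}, Module.End.eigenspace T lam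
    with hA
  -- iterated contraction
  have hTpow : ∀ (n : ℕ) (x : E), ‖(T ^ n) x‖ ≤ ‖x‖ := by
    intro n
    induction n with
    | zero => intro x; simp
    | succ n ih =>
      intro x
      rw [pow_succ, Module.End.mul_apply]
      exact (ih (T x)).trans (hT x)
  -- the adjoint is a contraction
  set S : Module.End ℂ E := LinearMap.adjoint T with hS
  have hSnorm : ∀ x, ‖S x‖ ≤ ‖x‖ := by
    intro x
    rcases eq_or_lt_of_le (norm_nonneg (S x)) with h0 | h0
    · rw [← h0]; exact norm_nonneg x
    · have h2 : (inner ℂ (S x) (S x) : ℂ) = inner ℂ x (T (S x)) :=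
        LinearMap.adjoint_inner_left T (S x) x
      have h3 : ‖S x‖ ^ 2 ≤ ‖x‖ * ‖S x‖ := by
        have e1 : ‖S x‖ ^ 2 = RCLike.re (inner ℂ (S x) (S x) : ℂ) :=
          (inner_self_eq_norm_sq (𝕜 := ℂ) (S x)).symm
        rw [e1, h2]
        calc RCLike.re (inner ℂ x (T (S x)) : ℂ) ≤ ‖(inner ℂ x (T (S x)) : ℂ)‖ :=
              RCLike.re_le_norm _
          _ ≤ ‖x‖ * ‖T (S x)‖ := norm_inner_le_norm x _
          _ ≤ ‖x‖ * ‖S x‖ := mul_le_mul_of_nonneg_left (hT (S x)) (norm_nonneg x)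
      rw [pow_two] at h3
      exact le_of_mul_le_mul_right h3 h0
  -- unit eigenvectors of `T` are eigenvectors of `S`
  have hSeig : ∀ (lam : ℂ), ‖lam‖ = 1 → ∀ x, T x = lam • x →
      S x = (starRingEnd ℂ lam) • x := by
    intro lam hlam x hx
    have hc : (starRingEnd ℂ lam) * lam = 1 := by
      rw [mul_comm, Complex.mul_conj, Complex.normSq_eq_norm_sq, hlam]
      norm_num
    have hin : (inner ℂ (S x) ((starRingEnd ℂ lam) • x) : ℂ) = (‖x‖ : ℂ) ^ 2 := by
      rw [inner_smul_right]
      have h1 : (inner ℂ (S x) x : ℂ) = inner ℂ x (T x) := LinearMap.adjoint_inner_left T x x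
      rw [h1, hx, inner_smul_right, ← mul_assoc, hc, one_mul, inner_self_eq_norm_sq_to_K]
      rfl
    have hre : RCLike.re (inner ℂ (S x) ((starRingEnd ℂ lam) • x) : ℂ) = ‖x‖ ^ 2 := by
      rw [hin]
      norm_cast
    have hnsm : ‖(starRingEnd ℂ lam) • x‖ = ‖x‖ := by
      rw [norm_smul]
      simp [hlam]
    have h2 : ‖S x - (starRingEnd ℂ lam) • x‖ ^ 2 ≤ 0 := by
      rw [norm_sub_sq (𝕜 := ℂ), hre, hnsm]
      nlinarith [hSnorm x, norm_nonneg (S x), norm_nonneg x]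
    have h3 : ‖S x - (starRingEnd ℂ lam) • x‖ = 0 := by
      nlinarith [norm_nonneg (S x - (starRingEnd ℂ lam) • x)]
    rw [← sub_eq_zero]
    exact norm_eq_zero.mp h3
  -- A is invariant under T and S
  have hmemA : ∀ (lam : ℂ), ‖lam‖ = 1 → ∀ x ∈ Module.End.eigenspace T lam, x ∈ A := by
    intro lam hlam x hx
    rw [hA]
    exact le_iSup₂ (f := fun lam (_ : lam ∈ {l : ℂ | ‖l‖ = 1}) =>
      Module.End.eigenspace T lam) lam hlam hx
  have hA_le : ∀ (q : Submodule ℂ E),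
      (∀ lam : ℂ, ‖lam‖ = 1 → Module.End.eigenspace T lam ≤ q) → A ≤ q := by
    intro q h
    rw [hA]
    exact iSup₂_le fun lam hlam => h lam hlam
  have hA_T : ∀ x ∈ A, T x ∈ A := by
    intro x hx
    refine hA_le (Submodule.comap T A) (fun lam hlam z hz => ?_) hx
    have hz' : T z = lam • z := Module.End.mem_eigenspace_iff.mp hz
    simp only [Submodule.mem_comap]
    rw [hz']
    exact Submodule.smul_mem A lam (hmemA lam hlam z hz)
  have hA_S : ∀ x ∈ A, S x ∈ A := by
    intro x hx
    refine hA_le (Submodule.comap S A) (fun lam hlam z hz => ?_) hx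
    have hz' : T z = lam • z := Module.End.mem_eigenspace_iff.mp hz
    simp only [Submodule.mem_comap]
    rw [hSeig lam hlam z hz']
    exact Submodule.smul_mem A _ (hmemA lam hlam z hz)
  -- the orthogonal complement of A is invariant under T
  have hAperp : ∀ z ∈ Aᗮ, T z ∈ Aᗮ := by
    intro z hz
    rw [Submodule.mem_orthogonal]
    intro u hu
    have : (inner ℂ (S u) z : ℂ) = inner ℂ u (T z) := LinearMap.adjoint_inner_left T z u
    rw [← this]
    exact (Submodule.mem_orthogonal A z).mp hz (S u) (hA_S u hu)
  -- generalized eigenvectors for unit eigenvalues are genuine eigenvectors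
  have hunit : ∀ (mu : ℂ), ‖mu‖ = 1 → ∀ (k : ℕ) (x : E),
      ((T - mu • 1) ^ k) x = 0 → T x = mu • x := by
    intro mu hmu k
    induction k with
    | zero =>
      intro x hx
      simp only [pow_zero, Module.End.one_apply] at hx
      rw [hx]
      simp
    | succ k ih =>
      intro x hx
      set u : E := T x - mu • x with hu
      have hsub : (T - mu • 1) x = u := by
        simp [hu, LinearMap.sub_apply, LinearMap.smul_apply]
      have hu0 : ((T - mu • 1) ^ k) u = 0 := by
        rw [← hsub, ← Module.End.mul_apply, ← pow_succ]
        exact hx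
      have hTu : T u = mu • u := ih u hu0
      have hTx : T x = mu • x + u := by rw [hu]; abel
      have horb : ∀ n : ℕ, (T ^ n) x = mu ^ n • x + ((n : ℂ) * mu ^ (n - 1)) • u := by
        intro n
        induction n with
        | zero => simp
        | succ n ihn =>
          rw [pow_succ', Module.End.mul_apply, ihn, map_add, _root_.map_smul, _root_.map_smul, hTu, hTx]
          rcases Nat.eq_zero_or_pos n with h0 | h0
          · subst h0
            simp [pow_succ]
          · have h1 : mu ^ (n - 1) * mu = mu ^ n := by
              rw [← pow_succ]
              congr 1
              omega
            have h2 : ((n : ℂ) * mu ^ (n - 1)) • (mu • u) = ((n : ℂ) * mu ^ n) • u := by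
              rw [smul_smul, mul_assoc, h1]
            rw [h2]
            have h3 : (n : ℕ) + 1 - 1 = n := by omega
            rw [h3]
            push_cast
            module
      have hb : ∀ n : ℕ, (n : ℝ) * ‖u‖ ≤ 2 * ‖x‖ := by
        intro n
        have h1 : ‖((n : ℂ) * mu ^ (n - 1)) • u‖ = (n : ℝ) * ‖u‖ := by
          rw [norm_smul, norm_mul, norm_pow, RCLike.norm_natCast, hmu,
            one_pow, mul_one]
        have h2 : ‖(mu ^ n : ℂ) • x‖ = ‖x‖ := by
          rw [norm_smul, norm_pow, hmu, one_pow, one_mul]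
        have h3 := hTpow n x
        rw [horb n] at h3
        have h4 := norm_sub_le (mu ^ n • x + ((n : ℂ) * mu ^ (n - 1)) • u) (mu ^ n • x)
        rw [add_sub_cancel_left] at h4
        rw [h1, h2] at h4
        linarith
      have hu0' : u = 0 := by
        by_contra hne
        have hupos : 0 < ‖u‖ := norm_pos_iff.mpr hne
        obtain ⟨n, hn⟩ := exists_nat_gt (2 * ‖x‖ / ‖u‖)
        rw [div_lt_iff₀ hupos] at hn
        have := hb n
        linarith
      have : T x - mu • x = 0 := by rw [← hu, hu0']
      rw [sub_eq_zero] at this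
      exact this
  -- no generalized eigenvectors for eigenvalues outside the closed unit disc
  have hbig : ∀ (mu : ℂ), 1 < ‖mu‖ → ∀ (k : ℕ) (x : E),
      ((T - mu • 1) ^ k) x = 0 → x = 0 := by
    intro mu hmu k
    induction k with
    | zero =>
      intro x hx
      simpa using hx
    | succ k ih =>
      intro x hx
      have hsub : (T - mu • 1) x = T x - mu • x := by
        simp [LinearMap.sub_apply, LinearMap.smul_apply]
      have hu0 : ((T - mu • 1) ^ k) (T x - mu • x) = 0 := by
        rw [← hsub, ← Module.End.mul_apply, ← pow_succ]
        exact hx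
      have hTx : T x = mu • x := sub_eq_zero.mp (ih _ hu0)
      have h1 : ‖mu‖ * ‖x‖ ≤ ‖x‖ := by
        have h2 := hT x
        rw [hTx, norm_smul] at h2
        exact h2
      have h3 : ‖x‖ = 0 := by nlinarith [norm_nonneg x]
      exact norm_eq_zero.mp h3
  -- strictly contracting part: generalized eigenvectors tend to zero
  have hsmall : ∀ (mu : ℂ), ‖mu‖ < 1 → ∀ (k : ℕ) (x : E),
      ((T - mu • 1) ^ k) x = 0 → ∃ C : ℝ, 0 ≤ C ∧ ∀ n : ℕ,
        ‖(T ^ n) x‖ ≤ C * ((n : ℝ) + 1) ^ k * (max (‖mu‖) 2⁻¹) ^ n := by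
    intro mu hmu
    set r : ℝ := max (‖mu‖) 2⁻¹ with hrdef
    have hr0 : (0 : ℝ) < r := lt_of_lt_of_le (by norm_num) (le_max_right _ _)
    have hrhalf : (2 : ℝ)⁻¹ ≤ r := le_max_right _ _
    have hr1 : r < 1 := max_lt hmu (by norm_num)
    have hmur : ‖mu‖ ≤ r := le_max_left _ _
    intro k
    induction k with
    | zero =>
      intro x hx
      simp only [pow_zero, Module.End.one_apply] at hx
      refine ⟨0, le_rfl, fun n => ?_⟩
      rw [hx]
      simp
    | succ k ih =>
      intro x hx
      set u : E := T x - mu • x with hu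
      have hsub : (T - mu • 1) x = u := by
        simp [hu, LinearMap.sub_apply, LinearMap.smul_apply]
      have hu0 : ((T - mu • 1) ^ k) u = 0 := by
        rw [← hsub, ← Module.End.mul_apply, ← pow_succ]
        exact hx
      obtain ⟨C, hC0, hC⟩ := ih u hu0
      have hTx : T x = mu • x + u := by rw [hu]; abel
      have horb : ∀ n : ℕ, (T ^ n) x =
          mu ^ n • x + ∑ j ∈ Finset.range n, mu ^ (n - 1 - j) • (T ^ j) u := by
        intro n
        induction n with
        | zero => simp
        | succ n ihn =>
          rw [pow_succ', Module.End.mul_apply, ihn, map_add, _root_.map_smul, hTx, map_sum]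
          rw [Finset.sum_range_succ']
          have hterm : ∀ j ∈ Finset.range n,
              T (mu ^ (n - 1 - j) • (T ^ j) u) = mu ^ (n + 1 - 1 - (j + 1)) • (T ^ (j + 1)) u := by
            intro j hj
            rw [_root_.map_smul]
            congr 1
            · congr 1
              omega
            · rw [pow_succ', Module.End.mul_apply]
          rw [Finset.sum_congr rfl hterm]
          have hzero : mu ^ (n + 1 - 1 - 0) • (T ^ 0) u = mu ^ n • u := by
            simp
          rw [hzero]
          rw [smul_add, smul_smul, ← pow_succ]
          abel
      refine ⟨‖x‖ + 2 * C, by positivity, fun n => ?_⟩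
      rcases Nat.eq_zero_or_pos n with h0 | h0
      · subst h0
        simp only [pow_zero, Module.End.one_apply, Nat.cast_zero, zero_add, one_pow, mul_one]
        have h1 : (1 : ℝ) ≤ (0 + 1 : ℝ) ^ (k + 1) := by norm_num
        nlinarith [norm_nonneg x]
      · have hnorm1 : ‖(mu ^ n : ℂ) • x‖ ≤ r ^ n * ‖x‖ := by
          rw [norm_smul, norm_pow]
          exact mul_le_mul_of_nonneg_right (pow_le_pow_left₀ (norm_nonneg mu) hmur n)
            (norm_nonneg x)
        have hterm2 : ∀ j ∈ Finset.range n,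
            ‖mu ^ (n - 1 - j) • (T ^ j) u‖ ≤ C * ((n : ℝ) + 1) ^ k * r ^ (n - 1) := by
          intro j hj
          rw [Finset.mem_range] at hj
          rw [norm_smul, norm_pow]
          have h1 : ‖mu‖ ^ (n - 1 - j) ≤ r ^ (n - 1 - j) :=
            pow_le_pow_left₀ (norm_nonneg mu) hmur _
          have h2 : ‖(T ^ j) u‖ ≤ C * ((j : ℝ) + 1) ^ k * r ^ j := hC j
          have h3 : C * ((j : ℝ) + 1) ^ k ≤ C * ((n : ℝ) + 1) ^ k := by
            apply mul_le_mul_of_nonneg_left _ hC0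
            apply pow_le_pow_left₀ (by positivity)
            have : (j : ℝ) ≤ (n : ℝ) := Nat.cast_le.mpr hj.le
            linarith
          calc ‖mu‖ ^ (n - 1 - j) * ‖(T ^ j) u‖
              ≤ r ^ (n - 1 - j) * (C * ((j : ℝ) + 1) ^ k * r ^ j) := by
                apply mul_le_mul h1 h2 (norm_nonneg _) (by positivity)
            _ = C * ((j : ℝ) + 1) ^ k * (r ^ (n - 1 - j) * r ^ j) := by ring
            _ = C * ((j : ℝ) + 1) ^ k * r ^ (n - 1) := by
                rw [← pow_add]
                congr 2
                omega
            _ ≤ C * ((n : ℝ) + 1) ^ k * r ^ (n - 1) := by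
                apply mul_le_mul_of_nonneg_right h3 (by positivity)
        have hsum : ‖∑ j ∈ Finset.range n, mu ^ (n - 1 - j) • (T ^ j) u‖ ≤
            (n : ℝ) * (C * ((n : ℝ) + 1) ^ k * r ^ (n - 1)) := by
          calc ‖∑ j ∈ Finset.range n, mu ^ (n - 1 - j) • (T ^ j) u‖
              ≤ ∑ j ∈ Finset.range n, ‖mu ^ (n - 1 - j) • (T ^ j) u‖ := norm_sum_le _ _
            _ ≤ ∑ _j ∈ Finset.range n, C * ((n : ℝ) + 1) ^ k * r ^ (n - 1) :=
                Finset.sum_le_sum hterm2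
            _ = (n : ℝ) * (C * ((n : ℝ) + 1) ^ k * r ^ (n - 1)) := by
                rw [Finset.sum_const, Finset.card_range, nsmul_eq_mul]
        have hrpow : r ^ (n - 1) ≤ 2 * r ^ n := by
          have h1 : r ^ n = r ^ (n - 1) * r := by
            rw [← pow_succ]
            congr 1
            omega
          rw [h1]
          have h2 : r ^ (n - 1) * 1 ≤ r ^ (n - 1) * (2 * r) := by
            apply mul_le_mul_of_nonneg_left _ (by positivity)
            linarith
          linarith
        have hfinal := (norm_add_le _ _).trans (add_le_add hnorm1 hsum)
        rw [← horb n] at hfinal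
        have hmain : r ^ n * ‖x‖ + (n : ℝ) * (C * ((n : ℝ) + 1) ^ k * r ^ (n - 1)) ≤
            (‖x‖ + 2 * C) * ((n : ℝ) + 1) ^ (k + 1) * r ^ n := by
          have e1 : (n : ℝ) * (C * ((n : ℝ) + 1) ^ k * r ^ (n - 1)) ≤
              (n : ℝ) * (C * ((n : ℝ) + 1) ^ k * (2 * r ^ n)) := by
            apply mul_le_mul_of_nonneg_left _ (Nat.cast_nonneg n)
            apply mul_le_mul_of_nonneg_left hrpow (by positivity)
          have e2 : (n : ℝ) * (C * ((n : ℝ) + 1) ^ k * (2 * r ^ n)) ≤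
              2 * C * (((n : ℝ) + 1) * ((n : ℝ) + 1) ^ k) * r ^ n := by
            have hnn : (0:ℝ) ≤ C * (((n : ℝ) + 1) ^ k * r ^ n) := by positivity
            nlinarith [hnn]
          have hp1 : (1 : ℝ) ≤ ((n : ℝ) + 1) ^ k :=
            one_le_pow₀ (by linarith [Nat.cast_nonneg (α := ℝ) n])
          have e3 : r ^ n * ‖x‖ ≤ ‖x‖ * (((n : ℝ) + 1) * ((n : ℝ) + 1) ^ k) * r ^ n := by
            have h1le : (1:ℝ) ≤ ((n : ℝ) + 1) * ((n : ℝ) + 1) ^ k := by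
              nlinarith [hp1, Nat.cast_nonneg (α := ℝ) n]
            have hprod := mul_nonneg (mul_nonneg (norm_nonneg x) (pow_nonneg hr0.le n))
              (sub_nonneg.mpr h1le)
            nlinarith [hprod]
          calc r ^ n * ‖x‖ + (n : ℝ) * (C * ((n : ℝ) + 1) ^ k * r ^ (n - 1))
              ≤ ‖x‖ * (((n : ℝ) + 1) * ((n : ℝ) + 1) ^ k) * r ^ n +
                2 * C * (((n : ℝ) + 1) * ((n : ℝ) + 1) ^ k) * r ^ n := by linarith
            _ = (‖x‖ + 2 * C) * ((n : ℝ) + 1) ^ (k + 1) * r ^ n := by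
                rw [pow_succ]; ring
        exact hfinal.trans hmain
  -- vectors in a small generalized eigenspace belong to `Vsub T`
  have hsmallV : ∀ (mu : ℂ), ‖mu‖ < 1 → ∀ (k : ℕ) (x : E),
      ((T - mu • 1) ^ k) x = 0 → x ∈ Vsub T := by
    intro mu hmu k x hx
    obtain ⟨C, hC0, hC⟩ := hsmall mu hmu k x hx
    set r : ℝ := max (‖mu‖) 2⁻¹ with hrdef
    have hr0 : (0 : ℝ) < r := lt_of_lt_of_le (by norm_num) (le_max_right _ _)
    have hr1 : r < 1 := max_lt hmu (by norm_num)
    rw [mem_Vsub, tendsto_zero_iff_norm_tendsto_zero]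
    have hlim : Tendsto (fun n : ℕ => C * ((n : ℝ) + 1) ^ k * r ^ n) atTop (nhds 0) := by
      have h1 : Tendsto (fun n : ℕ => (n : ℝ) ^ k * r ^ n) atTop (nhds 0) :=
        tendsto_pow_const_mul_const_pow_of_lt_one k hr0.le hr1
      have h2 : Tendsto (fun n : ℕ => ((n + 1 : ℕ) : ℝ) ^ k * r ^ (n + 1)) atTop (nhds 0) :=
        h1.comp (tendsto_add_atTop_nat 1)
      have h3 := h2.const_mul (C / r)
      rw [mul_zero] at h3
      refine h3.congr fun n => ?_
      push_cast
      field_simp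
      ring
    exact squeeze_zero (fun n => norm_nonneg _) hC hlim
  -- the whole space decomposes
  have hAV : A ⊔ Vsub T = ⊤ := by
    rw [eq_top_iff, ← Module.End.iSup_maxGenEigenspace_eq_top T]
    refine iSup_le fun mu => fun x hx => ?_
    obtain ⟨k, hk⟩ := (Module.End.mem_maxGenEigenspace T mu x).mp hx
    rcases lt_trichotomy (‖mu‖) 1 with h | h | h
    · exact Submodule.mem_sup_right (hsmallV mu h k x hk)
    · refine Submodule.mem_sup_left ?_
      exact hmemA mu h x (Module.End.mem_eigenspace_iff.mpr (hunit mu h k x hk))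
    · rw [hbig mu h k x hk]
      exact Submodule.zero_mem _
  -- decompose y
  have hytop : y ∈ A ⊔ Vsub T := by rw [hAV]; exact Submodule.mem_top
  obtain ⟨a, ha, v, hv, hav⟩ := Submodule.mem_sup.mp hytop
  have hTa : ∀ n : ℕ, (T ^ n) a ∈ A := by
    intro n
    induction n with
    | zero => simpa using ha
    | succ n ihn =>
      rw [pow_succ', Module.End.mul_apply]
      exact hA_T _ ihn
  have hTyO : ∀ n : ℕ, (T ^ n) y ∈ Aᗮ := by
    intro n
    induction n with
    | zero => simpa using hy
    | succ n ihn =>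
      rw [pow_succ', Module.End.mul_apply]
      exact hAperp _ ihn
  have hv' : Tendsto (fun n => (T ^ n) v) atTop (nhds 0) := hv
  set Q := A.orthogonalProjectionOnto with hQ
  have hQv : Tendsto (fun n => ((Q ((T ^ n) v)) : E)) atTop (nhds 0) := by
    have h1 : Tendsto (fun n => Q ((T ^ n) v)) atTop (nhds (Q 0)) :=
      (Q.continuous.tendsto 0).comp hv'
    have h2 := (continuous_subtype_val.tendsto (Q 0)).comp h1
    simpa [Function.comp_def] using h2
  have hTa0 : Tendsto (fun n => (T ^ n) a) atTop (nhds 0) := by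
    have heq : ∀ n : ℕ, (T ^ n) a = - ((Q ((T ^ n) v)) : E) := by
      intro n
      have hQy : Q ((T ^ n) y) = 0 :=
        Submodule.orthogonalProjectionOnto_apply_of_mem_orthogonal (hTyO n)
      have hsum : (T ^ n) y = (T ^ n) a + (T ^ n) v := by rw [← hav, map_add]
      have h1 : Q ((T ^ n) a) + Q ((T ^ n) v) = 0 := by
        rw [← map_add, ← hsum, hQy]
      have h2 : ((Q ((T ^ n) a)) : E) = (T ^ n) a :=
        Submodule.starProjection_eq_self_iff.mpr (hTa n)
      have h3 := congrArg (fun z : A => (z : E)) h1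
      simp only [Submodule.coe_add, Submodule.coe_zero] at h3
      rw [h2] at h3
      exact eq_neg_of_add_eq_zero_left h3
    rw [show (fun n => (T ^ n) a) = fun n => - ((Q ((T ^ n) v)) : E) from funext heq]
    simpa using hQv.neg
  have hfin := hTa0.add hv'
  rw [add_zero] at hfin
  refine hfin.congr fun n => ?_
  rw [← map_add, hav]



theorem stmt_8 {d m : ℕ} (hd : 1 ≤ d)
    (U : Fin m → Matrix (Fin d) (Fin d) ℂ)
    (hU : ∀ i, U i ∈ Matrix.unitaryGroup (Fin d) ℂ)
    (p : Fin m → ℝ) (hp : ∀ i, 0 < p i) (hpsum : ∑ i, p i = 1)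
    (Φ P : Module.End ℂ (Matrix (Fin d) (Fin d) ℂ))
    (hΦ : ∀ ρ, Φ ρ = ∑ i, (p i : ℂ) • (U i * ρ * (U i)ᴴ))
    -- the attractor space: the (internal direct) sum of all eigenspaces of `Φ`
    -- corresponding to eigenvalues of unit modulus
    (Atr : Submodule ℂ (Matrix (Fin d) (Fin d) ℂ))
    (hAtr : Atr = ⨆ lam ∈ {l : ℂ | ‖l‖ = 1}, Module.End.eigenspace Φ lam)
    -- `P` is the orthogonal projection onto `Atr` w.r.t. the Hilbert–Schmidt inner ℂ product
    (hP1 : ∀ ρ, P ρ ∈ Atr)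
    (hP2 : ∀ ρ, ∀ Y ∈ Atr, (Yᴴ * (ρ - P ρ)).trace = 0)
    (ρ : Matrix (Fin d) (Fin d) ℂ) :
    Filter.Tendsto (fun n => hsNorm ((Φ ^ n) ρ - ((Φ ∘ₗ P) ^ n) ρ))
      Filter.atTop (nhds 0) := by
  classical
  set e := matEquiv d with he
  set T : Module.End ℂ (EuclideanSpace ℂ (Fin d × Fin d)) := e.conj Φ with hT
  have hTe : ∀ M, T (e M) = e (Φ M) := by
    intro M
    rw [hT, LinearEquiv.conj_apply]
    simp
  have hTen : ∀ (n : ℕ) (M), (T ^ n) (e M) = e ((Φ ^ n) M) := by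
    intro n
    induction n with
    | zero => intro M; simp
    | succ n ihn =>
      intro M
      rw [pow_succ', pow_succ', Module.End.mul_apply, Module.End.mul_apply, ihn, hTe]
  -- hsNorm is the norm under e
  have hsn : ∀ M : Matrix (Fin d) (Fin d) ℂ, hsNorm M = ‖e M‖ := by
    intro M
    exact hsNorm_matEquiv M
  -- unitary invariance of HS norm
  have hUinv : ∀ i M, ‖e (U i * M * (U i)ᴴ)‖ = ‖e M‖ := by
    intro i M
    have hu1 : (U i)ᴴ * U i = 1 := by
      have := (Matrix.mem_unitaryGroup_iff'.mp (hU i))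
      rwa [Matrix.star_eq_conjTranspose] at this
    have hu2 : ∀ N : Matrix (Fin d) (Fin d) ℂ, (U i)ᴴ * (U i * N) = N := by
      intro N
      rw [← Matrix.mul_assoc, hu1, Matrix.one_mul]
    have htr : ((U i * M * (U i)ᴴ)ᴴ * (U i * M * (U i)ᴴ)).trace = (Mᴴ * M).trace := by
      simp only [Matrix.conjTranspose_mul, Matrix.conjTranspose_conjTranspose]
      rw [Matrix.mul_assoc, Matrix.trace_mul_comm]
      simp only [Matrix.mul_assoc, hu2]
      rw [Matrix.trace_mul_comm]
      simp only [Matrix.mul_assoc, hu2]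
      rw [Matrix.trace_mul_comm]
    have h1 : (‖e (U i * M * (U i)ᴴ)‖ : ℝ) ^ 2 = ‖e M‖ ^ 2 := by
      have e1 := inner_self_eq_norm_sq (𝕜 := ℂ) (e (U i * M * (U i)ᴴ))
      have e2 := inner_self_eq_norm_sq (𝕜 := ℂ) (e M)
      rw [← e1, ← e2, inner_matEquiv, inner_matEquiv, htr]
    have h2 := congrArg Real.sqrt h1
    rwa [Real.sqrt_sq (norm_nonneg _), Real.sqrt_sq (norm_nonneg _)] at h2
  -- T is a contraction
  have hTcon : ∀ x, ‖T x‖ ≤ ‖x‖ := by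
    intro x
    have hx : x = e (e.symm x) := (e.apply_symm_apply x).symm
    set M := e.symm x with hM
    calc ‖T x‖ = ‖e (Φ M)‖ := by rw [hx, hTe]
      _ = ‖∑ i, (p i : ℂ) • e (U i * M * (U i)ᴴ)‖ := by
          rw [hΦ M, map_sum]
          simp only [_root_.map_smul]
      _ ≤ ∑ i, ‖(p i : ℂ) • e (U i * M * (U i)ᴴ)‖ := norm_sum_le _ _
      _ = ∑ i, p i * ‖e M‖ := by
          refine Finset.sum_congr rfl fun i _ => ?_
          rw [norm_smul, hUinv i M, Complex.norm_real]
          rw [Real.norm_eq_abs, abs_of_pos (hp i)]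
      _ = ‖e M‖ := by rw [← Finset.sum_mul, hpsum, one_mul]
      _ = ‖x‖ := by rw [← hx]
  -- Atr is invariant under Φ
  have hmemAtr : ∀ (lam : ℂ), ‖lam‖ = 1 →
      ∀ x ∈ Module.End.eigenspace Φ lam, x ∈ Atr := by
    intro lam hlam x hx
    rw [hAtr]
    exact le_iSup₂ (f := fun lam (_ : lam ∈ {l : ℂ | ‖l‖ = 1}) =>
      Module.End.eigenspace Φ lam) lam hlam hx
  have hΦAtr : ∀ x ∈ Atr, Φ x ∈ Atr := by
    intro x hx
    have hle : Atr ≤ Submodule.comap Φ Atr := by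
      rw [hAtr]
      refine iSup₂_le fun lam hlam z hz => ?_
      have hz' : Φ z = lam • z := Module.End.mem_eigenspace_iff.mp hz
      simp only [Submodule.mem_comap]
      rw [hz', ← hAtr]
      exact Submodule.smul_mem Atr lam (hmemAtr lam hlam z hz)
    exact Submodule.mem_comap.mp (hle hx)
  have hΦpow : ∀ (n : ℕ), ∀ x ∈ Atr, (Φ ^ n) x ∈ Atr := by
    intro n
    induction n with
    | zero => intro x hx; simpa using hx
    | succ n ihn =>
      intro x hx
      rw [pow_succ', Module.End.mul_apply]
      exact hΦAtr _ (ihn x hx)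
  -- P is the identity on Atr
  have hPid : ∀ x ∈ Atr, P x = x := by
    intro x hx
    have hY : x - P x ∈ Atr := Submodule.sub_mem _ hx (hP1 x)
    have h0 := hP2 x _ hY
    have h1 : (inner ℂ (e (x - P x)) (e (x - P x)) : ℂ) = 0 := by
      rw [he, inner_matEquiv, h0]
    have h2 : e (x - P x) = 0 := inner_self_eq_zero.mp h1
    have h3 : x - P x = 0 := by
      have h4 := congrArg e.symm h2
      simpa using h4
    have := sub_eq_zero.mp h3
    exact this.symm
  have hcomp : ∀ n : ℕ, ((Φ ∘ₗ P) ^ (n + 1)) ρ = (Φ ^ (n + 1)) (P ρ) := by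
    intro n
    induction n with
    | zero => simp
    | succ n ihn =>
      rw [pow_succ', Module.End.mul_apply, ihn, LinearMap.comp_apply,
        hPid _ (hΦpow (n + 1) _ (hP1 ρ)), ← Module.End.mul_apply, ← pow_succ']
  -- membership in the orthogonal complement
  have hA'le : (⨆ lam ∈ {l : ℂ | ‖l‖ = 1}, Module.End.eigenspace T lam) ≤
      Atr.map (e : Matrix (Fin d) (Fin d) ℂ →ₗ[ℂ] EuclideanSpace ℂ (Fin d × Fin d)) := by
    refine iSup₂_le fun lam hlam x hx => ?_
    have hx' : T x = lam • x := Module.End.mem_eigenspace_iff.mp hx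
    have hx2 : Φ (e.symm x) = lam • e.symm x := by
      have h1 : T (e (e.symm x)) = e (Φ (e.symm x)) := hTe (e.symm x)
      rw [e.apply_symm_apply, hx'] at h1
      have h2 := congrArg e.symm h1
      simpa using h2.symm
    have hmem : e.symm x ∈ Atr :=
      hmemAtr lam hlam _ (Module.End.mem_eigenspace_iff.mpr hx2)
    exact Submodule.mem_map.mpr ⟨e.symm x, hmem, e.apply_symm_apply x⟩
  have hyO : e (ρ - P ρ) ∈
      (⨆ lam ∈ {l : ℂ | ‖l‖ = 1}, Module.End.eigenspace T lam)ᗮ := by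
    rw [Submodule.mem_orthogonal]
    intro z hz
    obtain ⟨w, hw, hwz⟩ := Submodule.mem_map.mp (hA'le hz)
    have hwz' : e w = z := hwz
    rw [← hwz', he, inner_matEquiv]
    exact hP2 ρ w hw
  -- apply the key lemma
  have hlim := key_tendsto T hTcon hyO
  have hnorm := tendsto_zero_iff_norm_tendsto_zero.mp hlim
  refine hnorm.congr' ?_
  filter_upwards [Filter.eventually_ge_atTop 1] with n hn
  obtain ⟨k, rfl⟩ : ∃ k, n = k + 1 := ⟨n - 1, by omega⟩
  rw [hcomp k]
  have h1 : (Φ ^ (k + 1)) ρ - (Φ ^ (k + 1)) (P ρ) = (Φ ^ (k + 1)) (ρ - P ρ) :=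
    (map_sub _ _ _).symm
  rw [h1, hsn, ← hTen]
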